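/- Let S_t and S_c be k×k symmetric positive definite matrices and n_t, n_c, n positive reals with n = n_t + n_c. Then n_c²·S_c·S_t⁻¹ + n_t²·S_t·S_c⁻¹ ⪰ 2·n_t·n_c·I in the sense that the symmetrized versions satisfy the Loewner inequality; equivalently, (1/n²)(n_c²·S_t⁻¹ + n_t²·S_c⁻¹)(S_t + S_c), when conjugated appropriately, has all eigenvalues at least 1. More precisely: (1/n²)(n_c²·S_t⁻¹ + n_t²·S_c⁻¹) ⪰ (S_t + S_c)⁻¹. -/

import Mathlib

/-- For symmetric positive definite `S_t, S_c` and positive reals `n_t, n_c` with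
`n = n_t + n_c`, we have `(1/n²)(n_c² S_t⁻¹ + n_t² S_c⁻¹) ⪰ (S_t + S_c)⁻¹` in the
Loewner order. -/
theorem uri_mri_total_variance_loewner {k : ℕ}
    (St Sc : Matrix (Fin k) (Fin k) ℝ) (hSt : St.PosDef) (hSc : Sc.PosDef)
    (nt nc n : ℝ) (hnt : 0 < nt) (hnc : 0 < nc) (hn : n = nt + nc) :
    ((1 / n ^ 2 : ℝ) • (nc ^ 2 • St⁻¹ + nt ^ 2 • Sc⁻¹) - (St + Sc)⁻¹).PosSemidef := by
  subst hn
  have hn0 : 0 < nt + nc := by positivity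
  have hM : (St + Sc).PosDef := hSt.add hSc
  have hdt : IsUnit St.det := isUnit_iff_ne_zero.mpr hSt.det_pos.ne'
  have hdc : IsUnit Sc.det := isUnit_iff_ne_zero.mpr hSc.det_pos.ne'
  have hdM : IsUnit (St + Sc).det := isUnit_iff_ne_zero.mpr hM.det_pos.ne'
  have ht1 : St * St⁻¹ = 1 := Matrix.mul_nonsing_inv _ hdt
  have ht1' : St⁻¹ * St = 1 := Matrix.nonsing_inv_mul _ hdt
  have hc1 : Sc * Sc⁻¹ = 1 := Matrix.mul_nonsing_inv _ hdc
  have hc1' : Sc⁻¹ * Sc = 1 := Matrix.nonsing_inv_mul _ hdc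
  have hM1 : (St + Sc) * (St + Sc)⁻¹ = 1 := Matrix.mul_nonsing_inv _ hdM
  have hM1' : (St + Sc)⁻¹ * (St + Sc) = 1 := Matrix.nonsing_inv_mul _ hdM
  set X : Matrix (Fin k) (Fin k) ℝ :=
    (1 / (nt + nc) ^ 2 : ℝ) • (nc ^ 2 • St⁻¹ + nt ^ 2 • Sc⁻¹) - (St + Sc)⁻¹ with hX
  set C : Matrix (Fin k) (Fin k) ℝ := (nc / (nt + nc)) • Sc - (nt / (nt + nc)) • St with hC
  have key : (St + Sc) * X * (St + Sc) = C * (St⁻¹ + Sc⁻¹) * C := by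
    rw [hX, hC, Matrix.mul_sub, Matrix.sub_mul, Matrix.mul_assoc _ (St + Sc)⁻¹,
      hM1', Matrix.mul_one]
    simp only [Matrix.mul_add, Matrix.add_mul, Matrix.sub_mul, Matrix.mul_sub,
      Matrix.mul_smul, Matrix.smul_mul, smul_add, smul_sub, smul_smul,
      Matrix.mul_assoc]
    rw [ht1', hc1']
    simp only [Matrix.mul_one, ht1, hc1]
    simp only [← Matrix.mul_assoc, ht1, hc1, Matrix.one_mul, Matrix.mul_one]
    have h1 : St⁻¹ * Sc = St⁻¹ * Sc := rfl
    match_scalars <;> field_simp <;> ring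
  have hXeq : X = (St + Sc)⁻¹ * (C * (St⁻¹ + Sc⁻¹) * C) * (St + Sc)⁻¹ := by
    rw [← key]
    calc X = ((St + Sc)⁻¹ * (St + Sc)) * X * ((St + Sc) * (St + Sc)⁻¹) := by
            rw [hM1', hM1, Matrix.one_mul, Matrix.mul_one]
      _ = (St + Sc)⁻¹ * ((St + Sc) * X * (St + Sc)) * (St + Sc)⁻¹ := by
            simp only [Matrix.mul_assoc]
  have hPSD : (St⁻¹ + Sc⁻¹).PosSemidef :=
    (hSt.inv.posSemidef).add (hSc.inv.posSemidef)
  have hCsym : C.conjTranspose = C := by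
    rw [hC]
    have h1 : St.transpose = St := by
      simpa [Matrix.conjTranspose_eq_transpose_of_trivial] using hSt.isHermitian.eq
    have h2 : Sc.transpose = Sc := by
      simpa [Matrix.conjTranspose_eq_transpose_of_trivial] using hSc.isHermitian.eq
    simp [Matrix.conjTranspose_sub, Matrix.conjTranspose_smul, h1, h2]
  have hMsym : ((St + Sc)⁻¹).conjTranspose = (St + Sc)⁻¹ := hM.isHermitian.inv.eq
  rw [hXeq]
  have h1 : (C * (St⁻¹ + Sc⁻¹) * C).PosSemidef := by
    have := hPSD.conjTranspose_mul_mul_same (B := C)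
    rwa [hCsym] at this
  have := h1.conjTranspose_mul_mul_same (B := (St + Sc)⁻¹)
  rwa [hMsym] at this
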